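/- Let (Ω, ℱ, P) be a probability space and let (D_i)_{i≥1} be random variables taking values in {1,2,3,…} ∪ {∞}. Suppose there exist ε > 0 and C, c > 0 such that for every i ≥ 1 and every (t_1,…,t_{i−1}) ∈ {1,2,3,…}^{i−1} with P(D_1 = t_1, …, D_{i−1} = t_{i−1}) > 0, one has P(D_i = ∞ | D_1 = t_1, …, D_{i−1} = t_{i−1}) ≥ ε, and P(s ≤ D_i < ∞ | D_1 = t_1, …, D_{i−1} = t_{i−1}) ≤ C e^{−cs} for all s ≥ 1. Then there exist C' > 0 and c' > 0 such that for all n ≥ 1, P(there exists k ≥ 1 with D_1, …, D_k all finite and D_1 + ⋯ + D_k ≥ n) ≤ C' e^{−c' n}. (This is the abstract renewal estimate underlying the proof of Lemma 2.5 of the paper.) -/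

import Mathlib

open MeasureTheory ProbabilityTheory

/-- weight function: `wfn q d = q ^ d` for finite `d`, `0` for `d = ⊤`. -/
noncomputable def wfn (q : ENNReal) (d : ℕ∞) : ENNReal :=
  if d = ⊤ then 0 else q ^ d.toNat

lemma wfn_eq_tsum (q : ENNReal) (d : ℕ∞) :
    wfn q d = ∑' s : ℕ, if d = (s : ℕ∞) then q ^ s else 0 := by
  by_cases hd : d = ⊤
  · simp [wfn, hd]
  · rw [wfn, if_neg hd]
    have hiff : ∀ s : ℕ, (d = (s : ℕ∞)) ↔ (s = d.toNat) := by
      intro s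
      constructor
      · intro h; rw [h]; simp
      · intro h; subst h; exact (ENat.coe_toNat hd).symm
    calc (q ^ d.toNat) = ∑' s : ℕ, if s = d.toNat then q ^ d.toNat else 0 :=
          (tsum_ite_eq d.toNat (fun _ => q ^ d.toNat)).symm
      _ = ∑' s : ℕ, if d = (s : ℕ∞) then q ^ s else 0 := by
          refine tsum_congr fun s => ?_
          by_cases h : s = d.toNat
          · rw [if_pos h, if_pos ((hiff s).mpr h), h]
          · rw [if_neg h, if_neg (fun hh => h ((hiff s).mp hh))]

/-- Key conditional estimate: under an `ε` chance of `⊤` and an exponential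
tail on the finite part, the exponential moment of the finite part is at most
`1 - ε/2` for suitably small `lam`. -/
lemma key_bound {Ω : Type*} [MeasurableSpace Ω] (Q : Measure Ω) [IsProbabilityMeasure Q]
    {X : Ω → ℕ∞} (hX : Measurable X)
    (ε C c lam : ℝ) (m0 : ℕ)
    (hε : 0 < ε) (hε1 : ε ≤ 1) (hC : 0 < C) (hc : 0 < c)
    (hlam : 0 < lam) (hlam2 : lam ≤ c / 2)
    (hqm : Real.exp (lam * m0) ≤ 1 + ε / 4)
    (htailm : C * Real.exp (-(c/2)) ^ (m0+1) / (1 - Real.exp (-(c/2))) ≤ ε / 4)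
    (h1 : ENNReal.ofReal ε ≤ Q {ω | X ω = ⊤})
    (h2 : ∀ s : ℕ, 1 ≤ s →
      Q {ω | (s : ℕ∞) ≤ X ω ∧ X ω ≠ ⊤} ≤ ENNReal.ofReal (C * Real.exp (-c * s))) :
    ∫⁻ ω, wfn (ENNReal.ofReal (Real.exp lam)) (X ω) ∂Q ≤ ENNReal.ofReal (1 - ε/2) := by
  classical
  set q : ENNReal := ENNReal.ofReal (Real.exp lam) with hqdef
  set r : ℝ := Real.exp (-(c/2)) with hrdef
  have hr0 : 0 < r := Real.exp_pos _
  have hr1 : r < 1 := Real.exp_lt_one_iff.mpr (by linarith)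
  have hq1 : (1 : ENNReal) ≤ q := by
    rw [hqdef, ENNReal.one_le_ofReal]
    exact Real.one_le_exp hlam.le
  -- Step 1: represent the integral as a sum over values
  have hms : ∀ s : ℕ, MeasurableSet {ω | X ω = (s : ℕ∞)} := fun s =>
    hX (measurableSet_singleton _)
  have hrep : ∫⁻ ω, wfn q (X ω) ∂Q = ∑' s : ℕ, q ^ s * Q {ω | X ω = (s : ℕ∞)} := by
    have hpt : ∀ ω, wfn q (X ω) =
        ∑' s : ℕ, Set.indicator {ω' | X ω' = (s : ℕ∞)} (fun _ => q ^ s) ω := by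
      intro ω
      rw [wfn_eq_tsum]
      refine tsum_congr fun s => ?_
      by_cases h : X ω = (s : ℕ∞) <;> simp [Set.indicator, h]
    simp_rw [hpt]
    rw [lintegral_tsum fun s => (measurable_const.indicator (hms s)).aemeasurable]
    exact tsum_congr fun s => lintegral_indicator_const (hms s) _
  rw [hrep]
  -- Step 2: per-term bound
  have hterm : ∀ s : ℕ, q ^ s * Q {ω | X ω = (s : ℕ∞)} ≤
      q ^ m0 * Q {ω | X ω = (s : ℕ∞)} +
        (if m0 < s then ENNReal.ofReal (C * r ^ s) else 0) := by
    intro s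
    by_cases hs : s ≤ m0
    · rw [if_neg (by omega)]
      rw [add_zero]
      exact mul_le_mul_left (pow_le_pow_right₀ hq1 hs) _
    · push_neg at hs
      rw [if_pos hs]
      have hs1 : 1 ≤ s := by omega
      have hsub : {ω | X ω = (s : ℕ∞)} ⊆ {ω | (s : ℕ∞) ≤ X ω ∧ X ω ≠ ⊤} := by
        intro ω hω
        simp only [Set.mem_setOf_eq] at hω ⊢
        exact ⟨hω ▸ le_refl _, hω ▸ (by simp)⟩
      calc q ^ s * Q {ω | X ω = (s : ℕ∞)}
          ≤ q ^ s * ENNReal.ofReal (C * Real.exp (-c * s)) :=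
            mul_le_mul_right (le_trans (measure_mono hsub) (h2 s hs1)) _
        _ ≤ ENNReal.ofReal (C * r ^ s) := by
            rw [hqdef, ← ENNReal.ofReal_pow (Real.exp_pos _).le,
              ← ENNReal.ofReal_mul (by positivity)]
            apply ENNReal.ofReal_le_ofReal
            rw [← Real.exp_nat_mul, hrdef, ← Real.exp_nat_mul]
            have hexp : Real.exp (↑s * lam) * Real.exp (-c * ↑s) ≤
                Real.exp (↑s * -(c / 2)) := by
              rw [← Real.exp_add]
              apply Real.exp_le_exp.mpr
              have hsn : (0:ℝ) ≤ s := Nat.cast_nonneg s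
              nlinarith
            calc Real.exp (↑s * lam) * (C * Real.exp (-c * ↑s))
                = C * (Real.exp (↑s * lam) * Real.exp (-c * ↑s)) := by ring
              _ ≤ C * Real.exp (↑s * -(c / 2)) := mul_le_mul_of_nonneg_left hexp hC.le
        _ ≤ q ^ m0 * Q {ω | X ω = (s : ℕ∞)} + ENNReal.ofReal (C * r ^ s) :=
            le_add_self
  -- Step 3: sum of the first parts
  have hdisj : Pairwise (Function.onFun Disjoint fun s : ℕ => {ω | X ω = (s : ℕ∞)}) := by
    intro a b hab
    refine Set.disjoint_left.mpr fun ω h1' h2' => hab ?_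
    have : ((a : ℕ∞)) = (b : ℕ∞) := by
      rw [← h1', ← h2']
    exact_mod_cast this
  have hunion : (⋃ s : ℕ, {ω | X ω = (s : ℕ∞)}) = {ω | X ω ≠ ⊤} := by
    ext ω
    simp only [Set.mem_iUnion, Set.mem_setOf_eq]
    constructor
    · rintro ⟨s, hs⟩; rw [hs]; simp
    · intro h; exact ⟨(X ω).toNat, (ENat.coe_toNat h).symm⟩
  have hsum1 : ∑' s : ℕ, Q {ω | X ω = (s : ℕ∞)} = Q {ω | X ω ≠ ⊤} := by
    rw [← measure_iUnion hdisj hms, hunion]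
  have hfinle : Q {ω | X ω ≠ ⊤} ≤ ENNReal.ofReal (1 - ε) := by
    have hc1 : {ω | X ω ≠ ⊤} = {ω | X ω = ⊤}ᶜ := rfl
    rw [hc1, prob_compl_eq_one_sub (show MeasurableSet {ω | X ω = ⊤} from
      hX (measurableSet_singleton _))]
    calc (1 : ENNReal) - Q {ω | X ω = ⊤} ≤ 1 - ENNReal.ofReal ε := tsub_le_tsub_left h1 1
      _ = ENNReal.ofReal (1 - ε) := by
          rw [ENNReal.ofReal_sub 1 hε.le, ENNReal.ofReal_one]
  -- Step 4: tail sum bound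
  have htails : ∑' s : ℕ, (if m0 < s then ENNReal.ofReal (C * r ^ s) else 0) ≤
      ENNReal.ofReal (ε / 4) := by
    set f : ℕ → ℝ := fun s => if m0 < s then C * r ^ s else 0 with hfdef
    have hf0 : ∀ s, 0 ≤ f s := by
      intro s; rw [hfdef]; dsimp only; split_ifs
      · positivity
      · exact le_rfl
    have hfle : ∀ s, f s ≤ C * r ^ s := by
      intro s; rw [hfdef]; dsimp only; split_ifs
      · exact le_refl _
      · positivity
    have hgs : Summable (fun s : ℕ => C * r ^ s) :=
      (summable_geometric_of_lt_one hr0.le hr1).mul_left C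
    have hfs : Summable f := Summable.of_nonneg_of_le hf0 hfle hgs
    have heq : ∀ s : ℕ, (if m0 < s then ENNReal.ofReal (C * r ^ s) else 0) =
        ENNReal.ofReal (f s) := by
      intro s; rw [hfdef]; dsimp only; split_ifs <;> simp
    simp_rw [heq]
    rw [← ENNReal.ofReal_tsum_of_nonneg hf0 hfs]
    apply ENNReal.ofReal_le_ofReal
    have hshift := Summable.sum_add_tsum_nat_add (m0 + 1) hfs
    have hzero : ∑ i ∈ Finset.range (m0 + 1), f i = 0 := by
      apply Finset.sum_eq_zero
      intro i hi
      rw [hfdef]; dsimp only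
      rw [if_neg (by simp at hi; omega)]
    have htval : ∀ i : ℕ, f (i + (m0 + 1)) = C * r ^ (m0 + 1) * r ^ i := by
      intro i; rw [hfdef]; dsimp only
      rw [if_pos (by omega)]
      rw [add_comm i (m0+1), pow_add]; ring
    have : ∑' s, f s = C * r ^ (m0 + 1) * (1 - r)⁻¹ := by
      rw [← hshift, hzero, zero_add]
      simp_rw [htval]
      rw [tsum_mul_left, tsum_geometric_of_lt_one hr0.le hr1]
    rw [this]
    calc C * r ^ (m0 + 1) * (1 - r)⁻¹ = C * r ^ (m0 + 1) / (1 - r) := by ring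
      _ ≤ ε / 4 := htailm
  -- Combine
  calc ∑' s : ℕ, q ^ s * Q {ω | X ω = (s : ℕ∞)}
      ≤ ∑' s : ℕ, (q ^ m0 * Q {ω | X ω = (s : ℕ∞)} +
          (if m0 < s then ENNReal.ofReal (C * r ^ s) else 0)) :=
        ENNReal.tsum_le_tsum hterm
    _ = (∑' s : ℕ, q ^ m0 * Q {ω | X ω = (s : ℕ∞)}) +
        ∑' s : ℕ, (if m0 < s then ENNReal.ofReal (C * r ^ s) else 0) :=
        ENNReal.tsum_add
    _ ≤ ENNReal.ofReal ((1 + ε/4) * (1 - ε)) + ENNReal.ofReal (ε / 4) := by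
        apply add_le_add _ htails
        rw [ENNReal.tsum_mul_left, hsum1]
        calc q ^ m0 * Q {ω | X ω ≠ ⊤}
            ≤ q ^ m0 * ENNReal.ofReal (1 - ε) := mul_le_mul_right hfinle _
          _ ≤ ENNReal.ofReal ((1 + ε/4) * (1 - ε)) := by
              rw [hqdef, ← ENNReal.ofReal_pow (Real.exp_pos _).le,
                ← ENNReal.ofReal_mul (by positivity)]
              apply ENNReal.ofReal_le_ofReal
              rw [← Real.exp_nat_mul]
              have h1e : Real.exp (↑m0 * lam) ≤ 1 + ε/4 := by
                rw [mul_comm]; exact hqm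
              nlinarith [Real.exp_pos (↑m0 * lam)]
    _ ≤ ENNReal.ofReal (1 - ε/2) := by
        rw [← ENNReal.ofReal_add (by nlinarith) (by linarith)]
        apply ENNReal.ofReal_le_ofReal
        nlinarith

theorem renewal_exponential_estimate {Ω : Type*} [MeasurableSpace Ω]
    (P : Measure Ω) [IsProbabilityMeasure P]
    (D : ℕ → Ω → ℕ∞) (hmeas : ∀ i, Measurable (D i))
    (hge : ∀ i ω, 1 ≤ D i ω)
    (ε C c : ℝ) (hε : 0 < ε) (hC : 0 < C) (hc : 0 < c)
    (hinf : ∀ (i : ℕ) (t : Fin i → ℕ), (∀ j, 1 ≤ t j) →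
      0 < P {ω | ∀ j : Fin i, D j ω = (t j : ℕ∞)} →
      ENNReal.ofReal ε ≤
        P[|{ω | ∀ j : Fin i, D j ω = (t j : ℕ∞)}] {ω | D i ω = ⊤})
    (htail : ∀ (i : ℕ) (t : Fin i → ℕ), (∀ j, 1 ≤ t j) →
      0 < P {ω | ∀ j : Fin i, D j ω = (t j : ℕ∞)} →
      ∀ s : ℕ, 1 ≤ s →
        P[|{ω | ∀ j : Fin i, D j ω = (t j : ℕ∞)}]
            {ω | (s : ℕ∞) ≤ D i ω ∧ D i ω ≠ ⊤} ≤
          ENNReal.ofReal (C * Real.exp (-c * s))) :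
    ∃ C' c' : ℝ, 0 < C' ∧ 0 < c' ∧ ∀ n : ℕ, 1 ≤ n →
      P {ω | ∃ k : ℕ, 1 ≤ k ∧ (∀ j < k, D j ω ≠ ⊤) ∧
          (n : ℕ∞) ≤ ∑ j ∈ Finset.range k, D j ω} ≤
        ENNReal.ofReal (C' * Real.exp (-c' * n)) := by
  classical
  -- ε ≤ 1
  have hε1 : ε ≤ 1 := by
    have huniv : {ω : Ω | ∀ j : Fin 0, D j ω = ((Fin.elim0 j : ℕ) : ℕ∞)} = Set.univ := by
      ext ω; simp
    have h0 := hinf 0 Fin.elim0 (fun j => j.elim0) (by rw [huniv]; simp)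
    rw [huniv, cond_univ] at h0
    have := le_trans h0 prob_le_one
    exact ENNReal.ofReal_le_one.mp this
  -- choose constants
  set r : ℝ := Real.exp (-(c/2)) with hrdef
  have hr0 : 0 < r := Real.exp_pos _
  have hr1 : r < 1 := Real.exp_lt_one_iff.mpr (by linarith)
  have hδ : 0 < ε * (1 - r) / (4 * C) := by
    apply div_pos (by nlinarith) (by linarith)
  obtain ⟨m, hm⟩ := exists_pow_lt_of_lt_one hδ hr1
  set m0 : ℕ := m + 1 with hm0def
  have htailm : C * r ^ (m0 + 1) / (1 - r) ≤ ε / 4 := by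
    have hrm : r ^ (m0 + 1) ≤ r ^ m := pow_le_pow_of_le_one hr0.le hr1.le (by omega)
    rw [div_le_iff₀ (by linarith : (0:ℝ) < 1 - r)]
    have : C * r ^ (m0 + 1) ≤ C * (ε * (1 - r) / (4 * C)) := by
      apply mul_le_mul_of_nonneg_left (le_trans hrm hm.le) hC.le
    calc C * r ^ (m0 + 1) ≤ C * (ε * (1 - r) / (4 * C)) := this
      _ = ε * (1 - r) / 4 := by field_simp
      _ ≤ ε / 4 * (1 - r) := by ring_nf; rfl
  set lam : ℝ := min (c / 2) (Real.log (1 + ε / 4) / m0) with hlamdef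
  have hm0pos : (0:ℝ) < m0 := by positivity
  have hlam0 : 0 < lam :=
    lt_min (by linarith) (div_pos (Real.log_pos (by linarith)) hm0pos)
  have hlam2 : lam ≤ c / 2 := min_le_left _ _
  have hqm : Real.exp (lam * m0) ≤ 1 + ε / 4 := by
    have h1 : lam ≤ Real.log (1 + ε / 4) / m0 := min_le_right _ _
    have h2 : lam * m0 ≤ Real.log (1 + ε / 4) := by
      rw [← div_mul_cancel₀ (Real.log (1 + ε / 4)) (ne_of_gt hm0pos)]
      exact mul_le_mul_of_nonneg_right h1 hm0pos.le
    calc Real.exp (lam * m0) ≤ Real.exp (Real.log (1 + ε / 4)) := Real.exp_le_exp.mpr h2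
      _ = 1 + ε / 4 := Real.exp_log (by linarith)
  set q : ENNReal := ENNReal.ofReal (Real.exp lam) with hqdef
  have hq1 : (1 : ENNReal) ≤ q := by
    rw [hqdef, ENNReal.one_le_ofReal]; exact Real.one_le_exp hlam0.le
  set ρ : ENNReal := ENNReal.ofReal (1 - ε / 2) with hρdef
  -- the exponential-moment process
  set G : ℕ → Ω → ENNReal := fun k ω => ∏ j ∈ Finset.range k, wfn q (D j ω) with hGdef
  have hwm : ∀ i : ℕ, Measurable fun ω => wfn q (D i ω) := fun i =>
    (measurable_of_countable (wfn q)).comp (hmeas i)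
  have hGm : ∀ k, Measurable (G k) := fun k =>
    Finset.measurable_prod _ (fun j _ => hwm j)
  -- induction step
  have hstep : ∀ k, ∫⁻ ω, G (k + 1) ω ∂P ≤ ρ * ∫⁻ ω, G k ω ∂P := by
    intro k
    set A : (Fin k → ℕ∞) → Set Ω := fun t => {ω | ∀ j : Fin k, D (j : ℕ) ω = t j} with hAdef
    have hAm : ∀ t, MeasurableSet (A t) := by
      intro t
      have : A t = ⋂ j : Fin k, (D (j : ℕ)) ⁻¹' {t j} := by
        ext ω; simp [hAdef, Set.mem_iInter]
      rw [this]
      exact MeasurableSet.iInter fun j => (hmeas _) (measurableSet_singleton _)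
    have hAdisj : Pairwise (Function.onFun Disjoint A) := by
      intro t t' htt
      refine Set.disjoint_left.mpr fun ω h1 h2 => htt ?_
      funext j; rw [← h1 j, h2 j]
    have hAuniv : (⋃ t, A t) = Set.univ := by
      ext ω
      simp only [Set.mem_iUnion, Set.mem_univ, iff_true]
      exact ⟨fun j => D (j : ℕ) ω, fun j => rfl⟩
    have hpart : ∀ f : Ω → ENNReal, ∫⁻ ω, f ω ∂P = ∑' t, ∫⁻ ω in A t, f ω ∂P := by
      intro f
      rw [← setLIntegral_univ, ← hAuniv, lintegral_iUnion hAm hAdisj]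
    have hGsucc : ∀ ω, G (k + 1) ω = G k ω * wfn q (D k ω) := fun ω =>
      Finset.prod_range_succ _ _
    have hterm : ∀ t, ∫⁻ ω in A t, G (k + 1) ω ∂P ≤ ρ * ∫⁻ ω in A t, G k ω ∂P := by
      intro t
      by_cases hbad : ∃ j, t j = ⊤ ∨ t j = 0
      · obtain ⟨j, hj⟩ := hbad
        rcases hj with hj | hj
        · have hz : ∫⁻ ω in A t, G (k + 1) ω ∂P = 0 := by
            rw [setLIntegral_congr_fun (hAm t) (fun ω hω => ?_), lintegral_zero]
            show G (k + 1) ω = (fun _ => (0:ENNReal)) ω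
            apply Finset.prod_eq_zero (Finset.mem_range.mpr (show (j : ℕ) < k + 1 from
              lt_trans j.isLt (Nat.lt_succ_self k)))
            rw [hω j, hj]
            simp [wfn]
          rw [hz]; exact zero_le
        · have hempty : A t = ∅ := by
            rw [Set.eq_empty_iff_forall_notMem]
            intro ω hω
            have h1 := hge (j : ℕ) ω
            rw [hω j, hj] at h1
            simp at h1
          rw [hempty]
          simp
      · push_neg at hbad
        set t' : Fin k → ℕ := fun j => (t j).toNat with ht'def
        have htt : ∀ j, ((t' j : ℕ) : ℕ∞) = t j := fun j => ENat.coe_toNat (hbad j).1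
        have ht1 : ∀ j, 1 ≤ t' j := by
          intro j
          rcases Nat.eq_zero_or_pos (t' j) with h | h
          · exfalso
            apply (hbad j).2
            rw [← htt j, h]; rfl
          · exact h
        set ct : ENNReal := ∏ j : Fin k, wfn q (t j) with hctdef
        have hconst : ∀ ω ∈ A t, G k ω = ct := by
          intro ω hω
          calc G k ω = ∏ j : Fin k, wfn q (D (j : ℕ) ω) :=
              (Fin.prod_univ_eq_prod_range (fun j => wfn q (D j ω)) k).symm
            _ = ct := Finset.prod_congr rfl fun j _ => by rw [hω j]
        have hIl : ∫⁻ ω in A t, G (k + 1) ω ∂P = ct * ∫⁻ ω in A t, wfn q (D k ω) ∂P := by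
          rw [setLIntegral_congr_fun (hAm t)
            (fun ω hω => by rw [hGsucc ω, hconst ω hω]),
            lintegral_const_mul ct (hwm k)]
        have hIr : ∫⁻ ω in A t, G k ω ∂P = ct * P (A t) := by
          rw [setLIntegral_congr_fun (hAm t) (fun ω hω => hconst ω hω),
            setLIntegral_const]
        by_cases hP : P (A t) = 0
        · have hz : P.restrict (A t) = 0 := Measure.restrict_eq_zero.mpr hP
          rw [hIl, hIr, hP, hz]
          simp
        · have hAeq : A t = {ω | ∀ j : Fin k, D (j : ℕ) ω = ((t' j : ℕ) : ℕ∞)} := by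
            ext ω
            exact forall_congr' fun j => by rw [htt j]
          have hpos : 0 < P {ω | ∀ j : Fin k, D (j : ℕ) ω = ((t' j : ℕ) : ℕ∞)} := by
            rw [← hAeq]
            exact pos_iff_ne_zero.mpr hP
          have hQprob : IsProbabilityMeasure (P[|A t]) := cond_isProbabilityMeasure hP
          have h1 := hinf k t' ht1 hpos
          have h2 := htail k t' ht1 hpos
          rw [← hAeq] at h1 h2
          have hkey := key_bound (P[|A t]) (hmeas k) ε C c lam m0 hε hε1 hC hc
            hlam0 hlam2 hqm htailm h1 h2
          have hcondint : ∫⁻ ω, wfn q (D k ω) ∂(P[|A t]) =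
              (P (A t))⁻¹ * ∫⁻ ω in A t, wfn q (D k ω) ∂P := by
            rw [ProbabilityTheory.cond, lintegral_smul_measure, smul_eq_mul]
          rw [hcondint] at hkey
          have hfin : P (A t) ≠ ⊤ := measure_ne_top P _
          have hle : ∫⁻ ω in A t, wfn q (D k ω) ∂P ≤ P (A t) * ρ := by
            calc ∫⁻ ω in A t, wfn q (D k ω) ∂P
                = P (A t) * ((P (A t))⁻¹ * ∫⁻ ω in A t, wfn q (D k ω) ∂P) := by
                  rw [← mul_assoc, ENNReal.mul_inv_cancel hP hfin, one_mul]
              _ ≤ P (A t) * ρ := mul_le_mul_right hkey _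
          rw [hIl, hIr]
          calc ct * ∫⁻ ω in A t, wfn q (D k ω) ∂P ≤ ct * (P (A t) * ρ) :=
              mul_le_mul_right hle _
            _ = ρ * (ct * P (A t)) := by ring
    calc ∫⁻ ω, G (k + 1) ω ∂P = ∑' t, ∫⁻ ω in A t, G (k + 1) ω ∂P := hpart _
      _ ≤ ∑' t, ρ * ∫⁻ ω in A t, G k ω ∂P := ENNReal.tsum_le_tsum hterm
      _ = ρ * ∑' t, ∫⁻ ω in A t, G k ω ∂P := ENNReal.tsum_mul_left
      _ = ρ * ∫⁻ ω, G k ω ∂P := by rw [← hpart]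
  -- iterate
  have hGk : ∀ k, ∫⁻ ω, G k ω ∂P ≤ ρ ^ k := by
    intro k
    induction k with
    | zero => simp [hGdef]
    | succ k ih =>
      calc ∫⁻ ω, G (k + 1) ω ∂P ≤ ρ * ∫⁻ ω, G k ω ∂P := hstep k
        _ ≤ ρ * ρ ^ k := mul_le_mul_right ih _
        _ = ρ ^ (k + 1) := by rw [pow_succ, mul_comm]
  -- conclude
  refine ⟨2 / ε, lam, by positivity, hlam0, fun n hn => ?_⟩
  set B : ℕ → Set Ω := fun k => {ω | (∀ j < k + 1, D j ω ≠ ⊤) ∧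
    (n : ℕ∞) ≤ ∑ j ∈ Finset.range (k + 1), D j ω} with hBdef
  have hEB : {ω | ∃ k : ℕ, 1 ≤ k ∧ (∀ j < k, D j ω ≠ ⊤) ∧
      (n : ℕ∞) ≤ ∑ j ∈ Finset.range k, D j ω} ⊆ ⋃ k, B k := by
    rintro ω ⟨k, hk1, hfin, hsum⟩
    apply Set.mem_iUnion.mpr
    refine ⟨k - 1, ?_⟩
    have hkk : k - 1 + 1 = k := Nat.succ_pred_eq_of_pos hk1
    rw [hBdef]
    simp only [Set.mem_setOf_eq, hkk]
    exact ⟨hfin, hsum⟩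
  have hBbound : ∀ k, P (B k) ≤ ρ ^ (k + 1) * ENNReal.ofReal (Real.exp (-(lam * n))) := by
    intro k
    have hsub : ∀ ω ∈ B k, q ^ n ≤ G (k + 1) ω := by
      rintro ω ⟨hfin, hsum⟩
      have hcast : ∑ j ∈ Finset.range (k + 1), D j ω =
          ((∑ j ∈ Finset.range (k + 1), (D j ω).toNat : ℕ) : ℕ∞) := by
        rw [Nat.cast_sum]
        exact Finset.sum_congr rfl fun j hj =>
          (ENat.coe_toNat (hfin j (Finset.mem_range.mp hj))).symm
      have hnN : n ≤ ∑ j ∈ Finset.range (k + 1), (D j ω).toNat := by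
        rw [hcast] at hsum
        exact_mod_cast hsum
      have hGeq : G (k + 1) ω = q ^ (∑ j ∈ Finset.range (k + 1), (D j ω).toNat) := by
        rw [← Finset.prod_pow_eq_pow_sum]
        exact Finset.prod_congr rfl fun j hj => by
          rw [wfn, if_neg (hfin j (Finset.mem_range.mp hj))]
      rw [hGeq]
      exact pow_le_pow_right₀ hq1 hnN
    have h1 : q ^ n * P (B k) ≤ ρ ^ (k + 1) := by
      calc q ^ n * P (B k) = ∫⁻ _ω in B k, q ^ n ∂P := (setLIntegral_const _ _).symm
        _ ≤ ∫⁻ ω in B k, G (k + 1) ω ∂P := setLIntegral_mono (hGm (k + 1)) hsub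
        _ ≤ ∫⁻ ω, G (k + 1) ω ∂P := setLIntegral_le_lintegral _ _
        _ ≤ ρ ^ (k + 1) := hGk (k + 1)
    have hqn : q ^ n = ENNReal.ofReal (Real.exp (lam * n)) := by
      rw [hqdef, ← ENNReal.ofReal_pow (Real.exp_pos _).le, ← Real.exp_nat_mul, mul_comm]
    have hcancel : ENNReal.ofReal (Real.exp (lam * n)) *
        ENNReal.ofReal (Real.exp (-(lam * n))) = 1 := by
      rw [← ENNReal.ofReal_mul (Real.exp_pos _).le, ← Real.exp_add, add_neg_cancel,
        Real.exp_zero, ENNReal.ofReal_one]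
    calc P (B k) = P (B k) * (ENNReal.ofReal (Real.exp (lam * n)) *
          ENNReal.ofReal (Real.exp (-(lam * n)))) := by rw [hcancel, mul_one]
      _ = (q ^ n * P (B k)) * ENNReal.ofReal (Real.exp (-(lam * n))) := by
          rw [hqn]; ring
      _ ≤ ρ ^ (k + 1) * ENNReal.ofReal (Real.exp (-(lam * n))) :=
          mul_le_mul_left h1 _
  have hρ1 : ρ ≤ 1 := by
    rw [hρdef]; exact ENNReal.ofReal_le_one.mpr (by linarith)
  have hsumρ : ∑' k : ℕ, ρ ^ (k + 1) ≤ ENNReal.ofReal (2 / ε) := by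
    calc ∑' k : ℕ, ρ ^ (k + 1) ≤ ∑' k : ℕ, ρ ^ k :=
        ENNReal.tsum_le_tsum fun k =>
          pow_le_pow_of_le_one (zero_le) hρ1 (Nat.le_succ k)
      _ = (1 - ρ)⁻¹ := ENNReal.tsum_geometric ρ
      _ ≤ ENNReal.ofReal (2 / ε) := by
          have h1ρ : 1 - ρ = ENNReal.ofReal (ε / 2) := by
            rw [hρdef, ← ENNReal.ofReal_one, ← ENNReal.ofReal_sub _ (by linarith)]
            norm_num
          rw [h1ρ, ← ENNReal.ofReal_inv_of_pos (by positivity)]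
          apply ENNReal.ofReal_le_ofReal
          rw [inv_div]
  calc P {ω | ∃ k : ℕ, 1 ≤ k ∧ (∀ j < k, D j ω ≠ ⊤) ∧
        (n : ℕ∞) ≤ ∑ j ∈ Finset.range k, D j ω}
      ≤ P (⋃ k, B k) := measure_mono hEB
    _ ≤ ∑' k : ℕ, P (B k) := measure_iUnion_le _
    _ ≤ ∑' k : ℕ, ρ ^ (k + 1) * ENNReal.ofReal (Real.exp (-(lam * n))) :=
        ENNReal.tsum_le_tsum hBbound
    _ = (∑' k : ℕ, ρ ^ (k + 1)) * ENNReal.ofReal (Real.exp (-(lam * n))) :=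
        ENNReal.tsum_mul_right
    _ ≤ ENNReal.ofReal (2 / ε) * ENNReal.ofReal (Real.exp (-(lam * n))) :=
        mul_le_mul_left hsumρ _
    _ = ENNReal.ofReal (2 / ε * Real.exp (-lam * n)) := by
        rw [← ENNReal.ofReal_mul (by positivity), neg_mul]
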